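/- Let G be a group of rank r and let H ≤ G be a subgroup of finite index with [G:H] ≥ r. Suppose that every divisor d > 1 of [G : core_G(H)] satisfies d ≥ 2r − 1. Then every generating set S of G of size r is Nielsen equivalent to a multiset whose elements lie in pairwise distinct left cosets of H and in pairwise distinct right cosets of H, and hence is contained in some left-right transversal of H in G. -/

import Mathlib

open scoped Classical

section Defs

variable {G : Type*} [Group G]

/-- A single Nielsen move on a finite multiset of group elements: replace one
occurrence of `g` by `g⁻¹`, or by `h * g` or `g * h` where `h` is another
occurrence in the multiset. -/
def NielsenMove (S T : Multiset G) : Prop :=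
  (∃ g ∈ S, T = g⁻¹ ::ₘ S.erase g) ∨
    (∃ g ∈ S, ∃ h ∈ S.erase g, T = h * g ::ₘ S.erase g ∨ T = g * h ::ₘ S.erase g)

/-- Nielsen equivalence: one multiset is obtained from the other by a finite
sequence of Nielsen moves. -/
def NielsenEquiv (S T : Multiset G) : Prop :=
  Relation.ReflTransGen NielsenMove S T

/-- The elements of the multiset `S` lie in pairwise distinct left cosets of `H`. -/
def LeftDistinct (H : Subgroup G) (S : Multiset G) : Prop :=
  (S.map fun x => ((x : G) : G ⧸ H)).Nodup

/-- The elements of the multiset `S` lie in pairwise distinct right cosets of `H`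
(using that `Hx = Hy ↔ x⁻¹H = y⁻¹H`). -/
def RightDistinct (H : Subgroup G) (S : Multiset G) : Prop :=
  (S.map fun x => ((x⁻¹ : G) : G ⧸ H)).Nodup

/-- `T` is a left transversal of `H`: it contains exactly one element of each
left coset of `H`. -/
def IsLeftTransversal (H : Subgroup G) (T : Set G) : Prop :=
  ∀ g : G, ∃! t, t ∈ T ∧ ((t : G) : G ⧸ H) = ((g : G) : G ⧸ H)

/-- `T` is a right transversal of `H`: it contains exactly one element of each
right coset of `H` (using that `Hx = Hy ↔ x⁻¹H = y⁻¹H`). -/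
def IsRightTransversal (H : Subgroup G) (T : Set G) : Prop :=
  ∀ g : G, ∃! t, t ∈ T ∧ ((t⁻¹ : G) : G ⧸ H) = ((g⁻¹ : G) : G ⧸ H)

/-- The left coset `aH` as a set. -/
def lcoset (a : G) (H : Subgroup G) : Set G := {x | a⁻¹ * x ∈ H}

/-- The right coset `Ha` as a set. -/
def rcoset (H : Subgroup G) (a : G) : Set G := {x | x * a⁻¹ ∈ H}

/-- The double coset `HgH` as a set. -/
def dcoset (H : Subgroup G) (g : G) : Set G := {x | ∃ h₁ ∈ H, ∃ h₂ ∈ H, x = h₁ * g * h₂}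

/-- `S` is left-right clean relative to `H`: `S ∖ H` is nonempty and its elements
lie in pairwise distinct left cosets and pairwise distinct right cosets of `H`. -/
def LeftRightClean (H : Subgroup G) (S : Multiset G) : Prop :=
  (∃ x ∈ S, x ∉ H) ∧
    LeftDistinct H (S.filter fun x => x ∉ H) ∧
    RightDistinct H (S.filter fun x => x ∉ H)

end Defs

namespace NAux


open Multiset Subgroup

variable {G : Type*} [Group G]

lemma move_rev {S T : Multiset G} (hm : NielsenMove S T) : NielsenEquiv T S := by
  rcases hm with ⟨g, hg, rfl⟩ | ⟨g, hg, h, hh, rfl | rfl⟩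
  · refine Relation.ReflTransGen.single (Or.inl ?_)
    exact ⟨g⁻¹, mem_cons_self _ _, by rw [erase_cons_head, inv_inv, cons_erase hg]⟩
  · have m1 : NielsenMove (h * g ::ₘ S.erase g) ((h*g)⁻¹ ::ₘ S.erase g) :=
      Or.inl ⟨h*g, mem_cons_self _ _, by rw [erase_cons_head]⟩
    have m2 : NielsenMove ((h*g)⁻¹ ::ₘ S.erase g) (g⁻¹ ::ₘ S.erase g) := by
      refine Or.inr ⟨(h*g)⁻¹, mem_cons_self _ _, h, by rw [erase_cons_head]; exact hh, Or.inr ?_⟩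
      rw [erase_cons_head]
      congr 1
      group
    have m3 : NielsenMove (g⁻¹ ::ₘ S.erase g) S := by
      refine Or.inl ⟨g⁻¹, mem_cons_self _ _, ?_⟩
      rw [erase_cons_head, inv_inv, cons_erase hg]
    exact ((Relation.ReflTransGen.single m1).tail m2).tail m3
  · have m1 : NielsenMove (g * h ::ₘ S.erase g) ((g*h)⁻¹ ::ₘ S.erase g) :=
      Or.inl ⟨g*h, mem_cons_self _ _, by rw [erase_cons_head]⟩
    have m2 : NielsenMove ((g*h)⁻¹ ::ₘ S.erase g) (g⁻¹ ::ₘ S.erase g) := by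
      refine Or.inr ⟨(g*h)⁻¹, mem_cons_self _ _, h, by rw [erase_cons_head]; exact hh, Or.inl ?_⟩
      rw [erase_cons_head]
      congr 1
      group
    have m3 : NielsenMove (g⁻¹ ::ₘ S.erase g) S := by
      refine Or.inl ⟨g⁻¹, mem_cons_self _ _, ?_⟩
      rw [erase_cons_head, inv_inv, cons_erase hg]
    exact ((Relation.ReflTransGen.single m1).tail m2).tail m3

lemma equiv_symm {S T : Multiset G} (h : NielsenEquiv S T) : NielsenEquiv T S := by
  induction h with
  | refl => exact Relation.ReflTransGen.refl
  | tail _ hm ih => exact (move_rev hm).trans ih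

/-- Macro: multiply an element on the left by anything in the closure of the rest. -/
lemma mul_left_equiv (rest : Multiset G) {u : G}
    (hu : u ∈ Subgroup.closure {x : G | x ∈ rest}) (g : G) :
    NielsenEquiv (g ::ₘ rest) (u * g ::ₘ rest) := by
  revert g
  refine Subgroup.closure_induction (fun s hs g => ?_) (fun g => ?_) (fun a b _ _ ha hb g => ?_)
    (fun a _ ha g => ?_) hu
  · refine Relation.ReflTransGen.single (Or.inr ⟨g, mem_cons_self _ _, s, ?_, Or.inl ?_⟩) <;>
      rw [erase_cons_head]
    exact hs
  · rw [one_mul]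
    exact Relation.ReflTransGen.refl
  · have h1 := hb g
    have h2 := ha (b * g)
    rw [← mul_assoc] at h2
    exact h1.trans h2
  · have := ha (a⁻¹ * g)
    rw [← mul_assoc, mul_inv_cancel, one_mul] at this
    exact equiv_symm this

lemma mul_right_equiv (rest : Multiset G) {u : G}
    (hu : u ∈ Subgroup.closure {x : G | x ∈ rest}) (g : G) :
    NielsenEquiv (g ::ₘ rest) (g * u ::ₘ rest) := by
  revert g
  refine Subgroup.closure_induction (fun s hs g => ?_) (fun g => ?_) (fun a b _ _ ha hb g => ?_)
    (fun a _ ha g => ?_) hu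
  · refine Relation.ReflTransGen.single (Or.inr ⟨g, mem_cons_self _ _, s, ?_, Or.inr ?_⟩) <;>
      rw [erase_cons_head]
    exact hs
  · rw [mul_one]
    exact Relation.ReflTransGen.refl
  · have h1 := ha g
    have h2 := hb (g * a)
    rw [mul_assoc] at h2
    exact h1.trans h2
  · have := ha (g * a⁻¹)
    rw [mul_assoc, inv_mul_cancel, mul_one] at this
    exact equiv_symm this

lemma move_card {S T : Multiset G} (hm : NielsenMove S T) : T.card = S.card := by
  rcases hm with ⟨g, hg, rfl⟩ | ⟨g, hg, h, hh, rfl | rfl⟩ <;>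
  · rw [card_cons, card_erase_of_mem hg]
    exact Nat.succ_pred_eq_of_pos (card_pos_iff_exists_mem.2 ⟨g, hg⟩)

lemma equiv_card {S T : Multiset G} (h : NielsenEquiv S T) : T.card = S.card := by
  induction h with
  | refl => rfl
  | tail _ hm ih => rw [move_card hm, ih]

lemma move_closure {S T : Multiset G} (hm : NielsenMove S T) :
    Subgroup.closure {x : G | x ∈ T} = Subgroup.closure {x : G | x ∈ S} := by
  have key : ∀ (U V : Multiset G), (∀ x ∈ V, (x : G) ∈ Subgroup.closure {x : G | x ∈ U}) →
      Subgroup.closure {x : G | x ∈ V} ≤ Subgroup.closure {x : G | x ∈ U} := fun U V h =>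
    (Subgroup.closure_le _).mpr fun x hx => h x hx
  have hsub : ∀ (U : Multiset G) (a : G), a ∈ U →
      ∀ x ∈ U.erase a, (x : G) ∈ Subgroup.closure {y : G | y ∈ U} :=
    fun U a _ x hx => Subgroup.subset_closure (mem_of_mem_erase hx)
  have hmem : ∀ (U : Multiset G) (x : G), x ∈ U → (x : G) ∈ Subgroup.closure {y : G | y ∈ U} :=
    fun U x hx => Subgroup.subset_closure hx
  have split : ∀ (U : Multiset G) (a x : G), a ∈ U → x ∈ U → x = a ∨ x ∈ U.erase a := by
    intro U a x _ hx
    by_cases hxa : x = a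
    · exact Or.inl hxa
    · exact Or.inr ((mem_erase_of_ne hxa).mpr hx)
  apply le_antisymm
  · refine key _ _ fun x hx => ?_
    rcases hm with ⟨g, hg, rfl⟩ | ⟨g, hg, h, hh, rfl | rfl⟩ <;> rw [mem_cons] at hx
    · rcases hx with rfl | hx
      · exact inv_mem (hmem S g hg)
      · exact hsub S g hg x hx
    · rcases hx with rfl | hx
      · exact mul_mem (hmem S h (mem_of_mem_erase hh)) (hmem S g hg)
      · exact hsub S g hg x hx
    · rcases hx with rfl | hx
      · exact mul_mem (hmem S g hg) (hmem S h (mem_of_mem_erase hh))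
      · exact hsub S g hg x hx
  · refine key _ _ fun x hx => ?_
    rcases hm with ⟨g, hg, rfl⟩ | ⟨g, hg, h, hh, rfl | rfl⟩
    · rcases split S g x hg hx with rfl | hx'
      · have : x⁻¹ ∈ Subgroup.closure {y : G | y ∈ x⁻¹ ::ₘ S.erase x} :=
          Subgroup.subset_closure (mem_cons_self _ _)
        simpa using inv_mem this
      · exact Subgroup.subset_closure (mem_cons_of_mem hx')
    · rcases split S g x hg hx with rfl | hx'
      · have h1 : h ∈ Subgroup.closure {y : G | y ∈ h * x ::ₘ S.erase x} :=
          Subgroup.subset_closure (mem_cons_of_mem hh)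
        have h2 : h * x ∈ Subgroup.closure {y : G | y ∈ h * x ::ₘ S.erase x} :=
          Subgroup.subset_closure (mem_cons_self _ _)
        simpa using mul_mem (inv_mem h1) h2
      · exact Subgroup.subset_closure (mem_cons_of_mem hx')
    · rcases split S g x hg hx with rfl | hx'
      · have h1 : h ∈ Subgroup.closure {y : G | y ∈ x * h ::ₘ S.erase x} :=
          Subgroup.subset_closure (mem_cons_of_mem hh)
        have h2 : x * h ∈ Subgroup.closure {y : G | y ∈ x * h ::ₘ S.erase x} :=
          Subgroup.subset_closure (mem_cons_self _ _)
        simpa using mul_mem h2 (inv_mem h1)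
      · exact Subgroup.subset_closure (mem_cons_of_mem hx')

lemma equiv_closure {S T : Multiset G} (h : NielsenEquiv S T) :
    Subgroup.closure {x : G | x ∈ T} = Subgroup.closure {x : G | x ∈ S} := by
  induction h with
  | refl => rfl
  | tail _ hm ih => rw [move_closure hm, ih]



lemma ext_equiv_fiber {A B F : Type*} [Finite A] [Finite B]
    (h : Nat.card A = Nat.card B) (u : F → A) (v : F → B)
    (hu : Function.Injective u) (hv : Function.Injective v) :
    ∃ e : A ≃ B, ∀ f : F, e (u f) = v f := by
  classical
  cases nonempty_fintype A
  cases nonempty_fintype B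
  have hF : Finite F := Finite.of_injective u hu
  cases nonempty_fintype F
  have hAB : Fintype.card A = Fintype.card B := by
    rw [← Nat.card_eq_fintype_card, ← Nat.card_eq_fintype_card, h]
  have hcompl : Fintype.card ((Set.range u)ᶜ : Set A) = Fintype.card ((Set.range v)ᶜ : Set B) := by
    rw [Fintype.card_compl_set, Fintype.card_compl_set, hAB]
    congr 1
    rw [Set.card_range_of_injective hu, Set.card_range_of_injective hv]
  have e₂ := Fintype.equivOfCardEq hcompl
  refine ⟨(Equiv.Set.sumCompl (Set.range u)).symm.trans
    ((((Equiv.ofInjective u hu).symm.trans (Equiv.ofInjective v hv)).sumCongr e₂).trans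
      (Equiv.Set.sumCompl (Set.range v))), fun f => ?_⟩
  rw [Equiv.trans_apply, Equiv.trans_apply,
    Equiv.Set.sumCompl_symm_apply_of_mem (Set.mem_range_self f)]
  simp only [Equiv.sumCongr_apply, Sum.map_inl, Equiv.Set.sumCompl_apply_inl]
  rw [Equiv.trans_apply, Equiv.ofInjective_symm_apply]
  rfl

lemma ext_equiv {X I F : Type*} [Finite X] (α β : X → I)
    (hfib : ∀ i, Nat.card {x // α x = i} = Nat.card {x // β x = i})
    (u v : F → X) (hu : Function.Injective u) (hv : Function.Injective v)
    (hc : ∀ f, α (u f) = β (v f)) :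
    ∃ φ : X ≃ X, (∀ x, β (φ x) = α x) ∧ ∀ f, φ (u f) = v f := by
  classical
  have key : ∀ i : I, ∃ e : {x // α x = i} ≃ {x // β x = i},
      ∀ f : {f : F // α (u f) = i}, e ⟨u f.1, f.2⟩ = ⟨v f.1, by rw [← hc]; exact f.2⟩ := by
    intro i
    exact ext_equiv_fiber (hfib i)
      (fun f : {f : F // α (u f) = i} => (⟨u f.1, f.2⟩ : {x // α x = i}))
      (fun f => ⟨v f.1, by rw [← hc]; exact f.2⟩)
      (fun f g hfg => Subtype.ext (hu (congrArg Subtype.val hfg)))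
      (fun f g hfg => Subtype.ext (hv (congrArg Subtype.val hfg)))
  choose e he using key
  refine ⟨Equiv.ofFiberEquiv e, fun x => Equiv.ofFiberEquiv_map e x, fun f => ?_⟩
  have h2 := he (α (u f)) ⟨f, rfl⟩
  exact congrArg Subtype.val h2


section Transversal

open Subgroup

variable {Γ : Type*} [Group Γ]

def alphaQ (A : Subgroup Γ) (q : Γ ⧸ A) : DoubleCoset.Quotient (A : Set Γ) A :=
  Quotient.liftOn' q (fun g => DoubleCoset.mk A A g) (by
    intro a b h
    rw [QuotientGroup.leftRel_apply] at h
    exact (DoubleCoset.eq _ _ _ _).mpr ⟨1, one_mem _, a⁻¹ * b, h, by group⟩)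

def betaQ (A : Subgroup Γ) (q : Γ ⧸ A) : DoubleCoset.Quotient (A : Set Γ) A :=
  Quotient.liftOn' q (fun g => DoubleCoset.mk A A g⁻¹) (by
    intro a b h
    rw [QuotientGroup.leftRel_apply] at h
    exact (DoubleCoset.eq _ _ _ _).mpr ⟨(a⁻¹ * b)⁻¹, inv_mem h, 1, one_mem _, by group⟩)

lemma alphaQ_mk (A : Subgroup Γ) (g : Γ) : alphaQ A (g : Γ ⧸ A) = DoubleCoset.mk A A g := rfl

lemma betaQ_mk (A : Subgroup Γ) (g : Γ) : betaQ A (g : Γ ⧸ A) = DoubleCoset.mk A A g⁻¹ := rfl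

/-- The conjugate subgroup `g A g⁻¹`. -/
def CCj (A : Subgroup Γ) (g : Γ) : Subgroup Γ := A.comap (MulAut.conj g⁻¹).toMonoidHom

lemma mem_CCj (A : Subgroup Γ) (g x : Γ) : x ∈ CCj A g ↔ g⁻¹ * x * g ∈ A := by
  simp [CCj, Subgroup.mem_comap, MulAut.conj_apply, mul_assoc]

lemma fiber_eq_orbit (A : Subgroup Γ) (g : Γ) :
    {q : Γ ⧸ A | alphaQ A q = DoubleCoset.mk A A g} = MulAction.orbit A ((g : Γ ⧸ A)) := by
  ext q
  obtain ⟨z, rfl⟩ := QuotientGroup.mk_surjective q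
  simp only [Set.mem_setOf_eq, alphaQ_mk]
  constructor
  · intro hq
    obtain ⟨h, hh, k, hk, hg⟩ := (DoubleCoset.eq _ _ _ _).mp hq
    refine ⟨⟨h⁻¹, inv_mem hh⟩, ?_⟩
    show (h⁻¹ : Γ) • ((g : Γ ⧸ A)) = ((z : Γ ⧸ A))
    have : (h⁻¹ : Γ) • ((g : Γ ⧸ A)) = ((h⁻¹ * g : Γ) : Γ ⧸ A) := rfl
    rw [this, QuotientGroup.eq]
    have h2 : (h⁻¹ * g)⁻¹ * z = k⁻¹ := by rw [hg]; group
    rw [h2]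
    exact inv_mem hk
  · rintro ⟨⟨a, ha⟩, hq⟩
    have : ((a * g : Γ) : Γ ⧸ A) = ((z : Γ ⧸ A)) := hq
    rw [QuotientGroup.eq] at this
    exact (DoubleCoset.eq _ _ _ _).mpr ⟨a⁻¹, inv_mem ha, ((a * g)⁻¹ * z)⁻¹, inv_mem this, by group⟩

lemma stab_eq (A : Subgroup Γ) (g : Γ) :
    MulAction.stabilizer A ((g : Γ ⧸ A)) = (CCj A g).subgroupOf A := by
  ext a
  rw [MulAction.mem_stabilizer_iff, Subgroup.mem_subgroupOf, mem_CCj]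
  have h1 : a • ((g : Γ ⧸ A)) = (((a : Γ) * g : Γ) : Γ ⧸ A) := rfl
  rw [h1, QuotientGroup.eq]
  constructor
  · intro h
    have := inv_mem h
    simpa [mul_assoc] using this
  · intro h
    have := inv_mem h
    simpa [mul_assoc] using this

lemma card_fiber_eq (A : Subgroup Γ) (g : Γ) :
    Nat.card {q : Γ ⧸ A // alphaQ A q = DoubleCoset.mk A A g} = (CCj A g).relIndex A := by
  have e1 : {q : Γ ⧸ A // alphaQ A q = DoubleCoset.mk A A g} ≃ MulAction.orbit A ((g : Γ ⧸ A)) :=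
    Equiv.setCongr (fiber_eq_orbit A g)
  rw [Nat.card_congr e1,
    Nat.card_congr (MulAction.orbitEquivQuotientStabilizer A ((g : Γ ⧸ A))), stab_eq]
  rfl

lemma relindexE (A : Subgroup Γ) [A.FiniteIndex] (g : Γ) :
    (CCj A g).relIndex A = (CCj A g⁻¹).relIndex A := by
  have conj_symm : ∀ w : Γ, (MulAut.conj w⁻¹).symm = MulAut.conj w := by
    intro w; ext x
    rw [MulAut.conj_symm_apply, MulAut.conj_apply, inv_inv]
  have e1 : ∀ w : Γ, (CCj A w).relIndex A = A.relIndex (CCj A w⁻¹) := by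
    intro w
    rw [CCj, Subgroup.relIndex_comap]
    congr 1
    rw [Subgroup.map_equiv_eq_comap_symm', conj_symm]
    rw [CCj, inv_inv]
  have e2 : (CCj A g⁻¹).relIndex A = A.relIndex (CCj A g⁻¹) := by
    have hCidx : (CCj A g⁻¹).index = A.index :=
      Subgroup.index_comap_of_surjective _ (MulEquiv.surjective _)
    have h1 : (CCj A g⁻¹ ⊓ A).relIndex A * A.index = (CCj A g⁻¹ ⊓ A).index :=
      Subgroup.relIndex_mul_index inf_le_right
    have h2 : (CCj A g⁻¹ ⊓ A).relIndex (CCj A g⁻¹) * (CCj A g⁻¹).index = (CCj A g⁻¹ ⊓ A).index :=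
      Subgroup.relIndex_mul_index inf_le_left
    have hfin : A.index ≠ 0 := Subgroup.FiniteIndex.index_ne_zero
    rw [hCidx] at h2
    have h3 := h1.trans h2.symm
    have h4 := Nat.eq_of_mul_eq_mul_right (Nat.pos_of_ne_zero hfin) h3
    rwa [Subgroup.inf_relIndex_right, Subgroup.inf_relIndex_left] at h4
  have hg : (CCj A g).relIndex A = A.relIndex (CCj A g⁻¹) := e1 g
  rw [hg, ← e2]

def beta_fiber_equiv (A : Subgroup Γ) (g : Γ) :
    {q : Γ ⧸ A // betaQ A q = DoubleCoset.mk A A g} ≃ {q : Γ ⧸ A // alphaQ A q = DoubleCoset.mk A A g⁻¹} := by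
  refine Equiv.subtypeEquivRight fun q => ?_
  obtain ⟨z, rfl⟩ := QuotientGroup.mk_surjective q
  rw [alphaQ_mk, betaQ_mk]
  constructor
  · intro h
    obtain ⟨h₁, hh₁, k₁, hk₁, hgz⟩ := (DoubleCoset.eq _ _ _ _).mp h
    exact (DoubleCoset.eq _ _ _ _).mpr ⟨k₁⁻¹, inv_mem hk₁, h₁⁻¹, inv_mem hh₁, by
      rw [hgz]; group⟩
  · intro h
    obtain ⟨h₁, hh₁, k₁, hk₁, hgz⟩ := (DoubleCoset.eq _ _ _ _).mp h
    refine (DoubleCoset.eq _ _ _ _).mpr ⟨k₁⁻¹, inv_mem hk₁, h₁⁻¹, inv_mem hh₁, ?_⟩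
    have h2 : g = (h₁ * z * k₁)⁻¹ := by rw [← hgz, inv_inv]
    rw [h2]; group

lemma hfib (A : Subgroup Γ) [A.FiniteIndex] (i : DoubleCoset.Quotient (A : Set Γ) A) :
    Nat.card {q : Γ ⧸ A // alphaQ A q = i} = Nat.card {q : Γ ⧸ A // betaQ A q = i} := by
  obtain ⟨g, rfl⟩ : ∃ g, DoubleCoset.mk A A g = i := ⟨Quotient.out i, DoubleCoset.out_eq' _ _ i⟩
  rw [card_fiber_eq A g, Nat.card_congr (beta_fiber_equiv A g), card_fiber_eq A g⁻¹,
    relindexE A g]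

lemma exists_rep_lr (A : Subgroup Γ) (l m : Γ ⧸ A) (hlm : betaQ A m = alphaQ A l) :
    ∃ z : Γ, ((z : Γ ⧸ A)) = l ∧ (((z⁻¹ : Γ) : Γ ⧸ A)) = m := by
  obtain ⟨w, rfl⟩ := QuotientGroup.mk_surjective l
  obtain ⟨w', rfl⟩ := QuotientGroup.mk_surjective m
  rw [alphaQ_mk, betaQ_mk] at hlm
  obtain ⟨h, hh, k, hk, hw⟩ := (DoubleCoset.eq _ _ _ _).mp hlm
  refine ⟨w * k⁻¹, ?_, ?_⟩
  · rw [QuotientGroup.eq]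
    simpa using hk
  · rw [QuotientGroup.eq]
    have : (w * k⁻¹)⁻¹ = w' * h⁻¹ := by rw [hw]; group
    rw [this]
    simpa using hh

theorem toolC (A : Subgroup Γ) [A.FiniteIndex] (P : Finset Γ)
    (hPL : Set.InjOn (fun x : Γ => ((x : Γ ⧸ A))) ↑P)
    (hPR : Set.InjOn (fun x : Γ => ((x⁻¹ : Γ) : Γ ⧸ A)) ↑P) :
    ∃ T : Set Γ, IsLeftTransversal A T ∧ IsRightTransversal A T ∧ ∀ x ∈ P, x ∈ T := by
  classical
  obtain ⟨φ, hφβ, hφP⟩ := ext_equiv (alphaQ A) (betaQ A) (hfib A)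
    (fun p : {x // x ∈ P} => (((p : Γ) : Γ ⧸ A)))
    (fun p : {x // x ∈ P} => ((((p : Γ))⁻¹ : Γ) : Γ ⧸ A))
    (fun p q hpq => Subtype.ext (hPL (Finset.mem_coe.mpr p.2) (Finset.mem_coe.mpr q.2) hpq))
    (fun p q hpq => Subtype.ext (hPR (Finset.mem_coe.mpr p.2) (Finset.mem_coe.mpr q.2) hpq))
    (fun p => by rw [alphaQ_mk, betaQ_mk, inv_inv])
  have hchoice : ∀ l : Γ ⧸ A, ∃ w : Γ, ((w : Γ ⧸ A)) = l ∧ (((w⁻¹ : Γ) : Γ ⧸ A)) = φ l ∧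
      (∀ x ∈ P, ((x : Γ ⧸ A)) = l → w = x) := by
    intro l
    by_cases h : ∃ x, x ∈ P ∧ ((x : Γ ⧸ A)) = l
    · obtain ⟨x, hx, hxl⟩ := h
      refine ⟨x, hxl, ?_, ?_⟩
      · rw [← hxl]
        exact (hφP ⟨x, hx⟩).symm
      · intro y hy hyl
        exact hPL (Finset.mem_coe.mpr hx) (Finset.mem_coe.mpr hy) (hxl.trans hyl.symm)
    · obtain ⟨w, hw1, hw2⟩ := exists_rep_lr A l (φ l) (hφβ l)
      exact ⟨w, hw1, hw2, fun x hx hxl => absurd ⟨x, hx, hxl⟩ h⟩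
  choose e hel her heP using hchoice
  have heP' : ∀ x ∈ P, e ((x : Γ ⧸ A)) = x := fun x hx => heP _ x hx rfl
  refine ⟨Set.range e, ?_, ?_, fun x hx => ⟨_, heP' x hx⟩⟩
  · intro g
    refine ⟨e ((g : Γ ⧸ A)), ⟨Set.mem_range_self _, hel _⟩, ?_⟩
    rintro t ⟨⟨l, rfl⟩, ht⟩
    rw [hel l] at ht
    rw [ht]
  · intro g
    refine ⟨e (φ.symm (((g⁻¹ : Γ) : Γ ⧸ A))), ⟨Set.mem_range_self _, by
      rw [her, Equiv.apply_symm_apply]⟩, ?_⟩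
    rintro t ⟨⟨l, rfl⟩, ht⟩
    rw [her l] at ht
    rw [← ht, Equiv.symm_apply_apply]

end Transversal

section Avoid

open Subgroup

variable {G : Type*} [Group G]

lemma avoid (H K : Subgroup G) (hfin : H.relIndex K ≠ 0) (FL FR : Finset (G ⧸ H))
    (hcard : FL.card + FR.card < H.relIndex K) :
    ∃ u : G, u ∈ K ∧ ((u : G ⧸ H)) ∉ FL ∧ (((u⁻¹ : G) : G ⧸ H)) ∉ FR := by
  classical
  by_contra hno
  push_neg at hno
  haveI : (H.subgroupOf K).FiniteIndex := ⟨hfin⟩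
  obtain ⟨T, hTL, hTR, -⟩ := toolC (H.subgroupOf K) (∅ : Finset ↥K) (by simp) (by simp)
  have hrep : ∀ q : K ⧸ H.subgroupOf K, ∃ t : ↥K, t ∈ T ∧ ((t : K ⧸ H.subgroupOf K)) = q := by
    intro q
    obtain ⟨k, rfl⟩ := QuotientGroup.mk_surjective q
    obtain ⟨u, ⟨hu1, hu2⟩, -⟩ := hTL k
    exact ⟨u, hu1, hu2⟩
  choose t ht1 ht2 using hrep
  have injL : ∀ t₁ t₂ : ↥K, t₁ ∈ T → t₂ ∈ T →
      (((t₁ : G) : G ⧸ H)) = (((t₂ : G) : G ⧸ H)) → t₁ = t₂ := by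
    intro t₁ t₂ h1 h2 h
    rw [QuotientGroup.eq] at h
    have hA : ((t₁ : K ⧸ H.subgroupOf K)) = ((t₂ : K ⧸ H.subgroupOf K)) := by
      rw [QuotientGroup.eq]
      exact (Subgroup.mem_subgroupOf).mpr (by simpa using h)
    obtain ⟨u, hu, huniq⟩ := hTL t₁
    have e1 := huniq t₁ ⟨h1, rfl⟩
    have e2 := huniq t₂ ⟨h2, hA.symm⟩
    rw [e1, e2]
  have injR : ∀ t₁ t₂ : ↥K, t₁ ∈ T → t₂ ∈ T →
      ((((t₁ : G))⁻¹ : G) : G ⧸ H) = ((((t₂ : G))⁻¹ : G) : G ⧸ H) → t₁ = t₂ := by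
    intro t₁ t₂ h1 h2 h
    rw [QuotientGroup.eq] at h
    have hA : ((t₁⁻¹ : ↥K) : K ⧸ H.subgroupOf K) = ((t₂⁻¹ : ↥K) : K ⧸ H.subgroupOf K) := by
      rw [QuotientGroup.eq]
      exact (Subgroup.mem_subgroupOf).mpr (by simpa using h)
    obtain ⟨u, hu, huniq⟩ := hTR t₁
    have e1 := huniq t₁ ⟨h1, rfl⟩
    have e2 := huniq t₂ ⟨h2, hA.symm⟩
    rw [e1, e2]
  have hbad : ∀ q, (((t q : G)) : G ⧸ H) ∈ FL ∨ ((((t q : G))⁻¹ : G) : G ⧸ H) ∈ FR := by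
    intro q
    by_cases hL : (((t q : G)) : G ⧸ H) ∈ FL
    · exact Or.inl hL
    · exact Or.inr (hno ((t q : G)) (t q).2 hL)
  have hζ : ∃ ζ : (K ⧸ H.subgroupOf K) → ({x // x ∈ FL} ⊕ {x // x ∈ FR}),
      Function.Injective ζ := by
    refine ⟨fun q => if h : (((t q : G)) : G ⧸ H) ∈ FL then Sum.inl ⟨_, h⟩
      else Sum.inr ⟨_, (hbad q).resolve_left h⟩, ?_⟩
    intro q₁ q₂ h
    dsimp only at h
    by_cases h1 : (((t q₁ : G)) : G ⧸ H) ∈ FL <;>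
      by_cases h2 : (((t q₂ : G)) : G ⧸ H) ∈ FL
    · rw [dif_pos h1, dif_pos h2] at h
      have := congrArg (fun x => Sum.elim (Subtype.val) (Subtype.val) x) h
      simp only [Sum.elim_inl] at this
      rw [← ht2 q₁, ← ht2 q₂, injL _ _ (ht1 q₁) (ht1 q₂) this]
    · rw [dif_pos h1, dif_neg h2] at h
      exact absurd h (by simp)
    · rw [dif_neg h1, dif_pos h2] at h
      exact absurd h (by simp)
    · rw [dif_neg h1, dif_neg h2] at h
      have := congrArg (fun x => Sum.elim (Subtype.val) (Subtype.val) x) h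
      simp only [Sum.elim_inr] at this
      rw [← ht2 q₁, ← ht2 q₂, injR _ _ (ht1 q₁) (ht1 q₂) this]
  obtain ⟨ζ, hζinj⟩ := hζ
  have hle := Nat.card_le_card_of_injective ζ hζinj
  rw [Nat.card_sum] at hle
  have h1 : Nat.card {x // x ∈ FL} = FL.card := Nat.card_eq_finsetCard FL
  have h2 : Nat.card {x // x ∈ FR} = FR.card := Nat.card_eq_finsetCard FR
  have h3 : Nat.card (K ⧸ H.subgroupOf K) = H.relIndex K := rfl
  rw [h1, h2, h3] at hle
  omega

end Avoid
end NAux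

namespace NAux
set_option linter.unusedSectionVars false
section Phases

open Subgroup Multiset

variable {G : Type*} [Group G]

lemma lemmaB (H : Subgroup G) [H.FiniteIndex] (r : ℕ)
    (hdiv : ∀ d : ℕ, d ∣ H.normalCore.index → 1 < d → 2 * r - 1 ≤ d)
    (K : Subgroup G) (hK : ¬ K ≤ H) :
    2 * r - 1 ≤ H.relIndex K ∧ H.relIndex K ≠ 0 := by
  have hN : H.normalCore ≤ H := Subgroup.normalCore_le H
  have hle1 : H.normalCore ⊓ K ≤ H ⊓ K := inf_le_inf_right K hN
  have hmul : (H.normalCore ⊓ K).relIndex (H ⊓ K) * (H ⊓ K).relIndex K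
      = (H.normalCore ⊓ K).relIndex K :=
    Subgroup.relIndex_mul_relIndex _ _ K hle1 inf_le_right
  have hdvd1 : H.relIndex K ∣ H.normalCore.relIndex K := by
    rw [← Subgroup.inf_relIndex_right H K, ← Subgroup.inf_relIndex_right H.normalCore K, ← hmul]
    exact Dvd.intro_left _ rfl
  have hdvd2 : H.normalCore.relIndex K ∣ H.normalCore.index :=
    Subgroup.relIndex_dvd_index_of_normal _ _
  have hdvd : H.relIndex K ∣ H.normalCore.index := hdvd1.trans hdvd2
  have hn0 : H.normalCore.index ≠ 0 := Subgroup.FiniteIndex.index_ne_zero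
  have hne0 : H.relIndex K ≠ 0 := by
    intro h0
    rw [h0] at hdvd
    exact hn0 (zero_dvd_iff.mp hdvd)
  have hne1 : H.relIndex K ≠ 1 := by
    intro h1
    exact hK (Subgroup.relIndex_eq_one.mp h1)
  exact ⟨hdiv _ hdvd (by omega), hne0⟩

lemma exists_collision {β : Type*} (f : G → β) {m : Multiset G} (h : ¬ (m.map f).Nodup) :
    ∃ x ∈ m, ∃ y ∈ m.erase x, f x = f y := by
  induction m using Multiset.induction with
  | empty => simp at h
  | cons a s ih =>
    rw [Multiset.map_cons, Multiset.nodup_cons] at h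
    by_cases ha : f a ∈ s.map f
    · obtain ⟨y, hy, hfy⟩ := Multiset.mem_map.mp ha
      exact ⟨a, Multiset.mem_cons_self a s, y, by rw [Multiset.erase_cons_head]; exact hy,
        hfy.symm⟩
    · have hs : ¬ (s.map f).Nodup := fun hn => h ⟨ha, hn⟩
      obtain ⟨x, hx, y, hy, hf⟩ := ih hs
      refine ⟨x, Multiset.mem_cons_of_mem hx, y, ?_, hf⟩
      exact Multiset.mem_of_le (Multiset.erase_le_erase x (Multiset.le_cons_self s a)) hy

lemma mem_erase_symm {m : Multiset G} {x y : G} (hx : x ∈ m) (hy : y ∈ m.erase x) :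
    x ∈ m.erase y := by
  by_cases hxy : x = y
  · subst hxy; exact hy
  · exact (Multiset.mem_erase_of_ne hxy).mpr hx

lemma nodup_of_card_le_one {m : Multiset G} (h : m.card ≤ 1) : m.Nodup := by
  interval_cases hm : m.card
  · rw [Multiset.card_eq_zero.mp hm]; exact Multiset.nodup_zero
  · obtain ⟨a, rfl⟩ := Multiset.card_eq_one.mp hm
    exact Multiset.nodup_singleton a

lemma phase1 (H : Subgroup G) : ∀ n (S : Multiset G), (S.filter fun x => x ∉ H).card = n →
    ∃ S₁, NielsenEquiv S S₁ ∧ LeftDistinct H (S₁.filter fun x => x ∉ H) ∧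
      RightDistinct H (S₁.filter fun x => x ∉ H) := by
  intro n
  induction n using Nat.strong_induction_on with
  | _ n ih =>
  intro S hS
  by_cases hL : LeftDistinct H (S.filter fun x => x ∉ H)
  · by_cases hR : RightDistinct H (S.filter fun x => x ∉ H)
    · exact ⟨S, Relation.ReflTransGen.refl, hL, hR⟩
    · obtain ⟨x, hx, y, hy, hf⟩ := exists_collision _ hR
      have hxH : x ∉ H := (Multiset.mem_filter.mp hx).2
      have hxS : x ∈ S := (Multiset.mem_filter.mp hx).1
      have hyf : y ∈ S.filter fun x => x ∉ H := Multiset.mem_of_mem_erase hy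
      have hyH : y ∉ H := (Multiset.mem_filter.mp hyf).2
      have hyS : y ∈ S := (Multiset.mem_filter.mp hyf).1
      have hySx : y ∈ S.erase x :=
        Multiset.mem_of_le (Multiset.erase_le_erase x (Multiset.filter_le _ S)) hy
      have hxSy : x ∈ S.erase y := mem_erase_symm hxS hySx
      have hzH : y * x⁻¹ ∈ H := by
        have h1 : (x⁻¹ : G)⁻¹ * y⁻¹ ∈ H := QuotientGroup.eq.mp hf
        have h2 : x * y⁻¹ ∈ H := by simpa using h1
        simpa using inv_mem h2
      have e := mul_right_equiv (S.erase y) (inv_mem (Subgroup.subset_closure hxSy)) y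
      rw [Multiset.cons_erase hyS] at e
      have hfS : (S.filter fun x => x ∉ H) = y ::ₘ ((S.erase y).filter fun x => x ∉ H) := by
        conv_lhs => rw [← Multiset.cons_erase hyS]
        rw [Multiset.filter_cons_of_pos (p := fun x => x ∉ H) _ hyH]
      have hn1 : ((S.erase y).filter fun x => x ∉ H).card = n - 1 := by
        rw [hfS] at hS
        simp only [Multiset.card_cons] at hS
        omega
      have hnpos : 0 < n := by
        rw [hfS] at hS
        simp only [Multiset.card_cons] at hS
        omega
      have hS' : (((y * x⁻¹) ::ₘ S.erase y).filter fun x => x ∉ H).card = n - 1 := by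
        rw [Multiset.filter_cons_of_neg (p := fun x => x ∉ H) _ (by simpa using hzH), hn1]
      obtain ⟨S₁, he1, hL1, hR1⟩ := ih (n - 1) (by omega) _ hS'
      exact ⟨S₁, e.trans he1, hL1, hR1⟩
  · obtain ⟨x, hx, y, hy, hf⟩ := exists_collision _ hL
    have hxH : x ∉ H := (Multiset.mem_filter.mp hx).2
    have hxS : x ∈ S := (Multiset.mem_filter.mp hx).1
    have hyf : y ∈ S.filter fun x => x ∉ H := Multiset.mem_of_mem_erase hy
    have hyH : y ∉ H := (Multiset.mem_filter.mp hyf).2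
    have hyS : y ∈ S := (Multiset.mem_filter.mp hyf).1
    have hySx : y ∈ S.erase x :=
      Multiset.mem_of_le (Multiset.erase_le_erase x (Multiset.filter_le _ S)) hy
    have hxSy : x ∈ S.erase y := mem_erase_symm hxS hySx
    have hzH : x⁻¹ * y ∈ H := QuotientGroup.eq.mp hf
    have e := mul_left_equiv (S.erase y) (inv_mem (Subgroup.subset_closure hxSy)) y
    rw [Multiset.cons_erase hyS] at e
    have hfS : (S.filter fun x => x ∉ H) = y ::ₘ ((S.erase y).filter fun x => x ∉ H) := by
      conv_lhs => rw [← Multiset.cons_erase hyS]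
      rw [Multiset.filter_cons_of_pos (p := fun x => x ∉ H) _ hyH]
    have hn1 : ((S.erase y).filter fun x => x ∉ H).card = n - 1 := by
      rw [hfS] at hS
      simp only [Multiset.card_cons] at hS
      omega
    have hnpos : 0 < n := by
      rw [hfS] at hS
      simp only [Multiset.card_cons] at hS
      omega
    have hS' : (((x⁻¹ * y) ::ₘ S.erase y).filter fun x => x ∉ H).card = n - 1 := by
      rw [Multiset.filter_cons_of_neg (p := fun x => x ∉ H) _ (by simpa using hzH), hn1]
    obtain ⟨S₁, he1, hL1, hR1⟩ := ih (n - 1) (by omega) _ hS'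
    exact ⟨S₁, e.trans he1, hL1, hR1⟩

end Phases

end NAux

namespace NAux
section Phase2
set_option linter.unusedSectionVars false

open Subgroup Multiset

variable {G : Type*} [Group G]

lemma phase2 (H : Subgroup G) [H.FiniteIndex] (r : ℕ)
    (hdiv : ∀ d : ℕ, d ∣ H.normalCore.index → 1 < d → 2 * r - 1 ≤ d)
    (hproper : 2 ≤ r → H ≠ ⊤) :
    ∀ t (S : Multiset G), S.card = r → Subgroup.closure {x : G | x ∈ S} = ⊤ →
      (S.filter fun x => x ∈ H).card = t →
      LeftDistinct H (S.filter fun x => x ∉ H) → RightDistinct H (S.filter fun x => x ∉ H) →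
      ∃ S₁, NielsenEquiv S S₁ ∧ (S₁.filter fun x => x ∈ H).card ≤ 1 ∧
        LeftDistinct H (S₁.filter fun x => x ∉ H) ∧
        RightDistinct H (S₁.filter fun x => x ∉ H) := by
  intro t
  induction t using Nat.strong_induction_on with
  | _ t ih =>
  intro S hcard hgen ht hL hR
  by_cases htle : (S.filter fun x => x ∈ H).card ≤ 1
  · exact ⟨S, Relation.ReflTransGen.refl, htle, hL, hR⟩
  have ht2 : 2 ≤ t := by omega
  have htr : t ≤ r := by
    rw [← ht, ← hcard]
    exact Multiset.card_le_card (Multiset.filter_le _ S)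
  have hr2 : 2 ≤ r := le_trans ht2 htr
  have hHprop : H ≠ ⊤ := hproper hr2
  have hex : ∃ x ∈ S, x ∉ H := by
    by_contra hc
    push_neg at hc
    have hle : Subgroup.closure {x : G | x ∈ S} ≤ H := (Subgroup.closure_le H).mpr hc
    rw [hgen] at hle
    exact hHprop (top_le_iff.mp hle)
  obtain ⟨x₀, hx₀S, hx₀H⟩ := hex
  have hexh : ∃ h₁, h₁ ∈ S.filter (fun x => x ∈ H) := by
    apply Multiset.exists_mem_of_ne_zero
    intro h0
    rw [h0] at ht
    simp only [Multiset.card_zero] at ht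
    omega
  obtain ⟨h₁, hh₁f⟩ := hexh
  have hh₁S : h₁ ∈ S := Multiset.mem_of_mem_filter hh₁f
  have hh₁H : h₁ ∈ H := (Multiset.mem_filter.mp hh₁f).2
  have hx₀rest : x₀ ∈ S.erase h₁ :=
    (Multiset.mem_erase_of_ne (by rintro rfl; exact hx₀H hh₁H)).mpr hx₀S
  have hKnotle : ¬ Subgroup.closure {x : G | x ∈ S.erase h₁} ≤ H :=
    fun hle => hx₀H (hle (Subgroup.subset_closure hx₀rest))
  obtain ⟨hB1, hB2⟩ := lemmaB H r hdiv _ hKnotle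
  have hSsplit : S.filter (fun x => x ∉ H) = (S.erase h₁).filter (fun x => x ∉ H) := by
    conv_lhs => rw [← Multiset.cons_erase hh₁S]
    rw [Multiset.filter_cons_of_neg (p := fun x => x ∉ H) _ (by simpa using hh₁H)]
  have hcardnonH : (S.filter fun x => x ∉ H).card = r - t := by
    have hc2 := congrArg Multiset.card (Multiset.filter_add_not (fun x => x ∈ H) S)
    rw [Multiset.card_add] at hc2
    rw [ht, hcard] at hc2
    omega
  classical
  set FL : Finset (G ⧸ H) :=
    ((S.filter fun x => x ∉ H).map fun v : G => ((v : G ⧸ H))).toFinset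
      ∪ {((1 : G) : G ⧸ H)} with hFL
  set FR : Finset (G ⧸ H) :=
    ((S.filter fun x => x ∉ H).map fun v => (((h₁ * v⁻¹ : G) : G ⧸ H))).toFinset
      ∪ {((1 : G) : G ⧸ H)} with hFR
  have hFLcard : FL.card ≤ (r - t) + 1 := by
    refine le_trans (Finset.card_union_le _ _) ?_
    have h1 := Multiset.toFinset_card_le ((S.filter fun x => x ∉ H).map fun v : G => ((v : G ⧸ H)))
    rw [Multiset.card_map, hcardnonH] at h1
    simpa using h1
  have hFRcard : FR.card ≤ (r - t) + 1 := by
    refine le_trans (Finset.card_union_le _ _) ?_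
    have h1 := Multiset.toFinset_card_le
      ((S.filter fun x => x ∉ H).map fun v => (((h₁ * v⁻¹ : G) : G ⧸ H)))
    rw [Multiset.card_map, hcardnonH] at h1
    simpa using h1
  obtain ⟨u, huK, huFL, huFR⟩ := avoid H _ hB2 FL FR (by omega)
  have huH : u ∉ H := by
    intro hu
    apply huFL
    rw [hFL]
    apply Finset.mem_union_right
    rw [Finset.mem_singleton, QuotientGroup.eq]
    simpa using inv_mem hu
  have hzH : u * h₁ ∉ H := fun hm => huH (by simpa using H.mul_mem hm (inv_mem hh₁H))
  have e := mul_left_equiv (S.erase h₁) huK h₁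
  rw [Multiset.cons_erase hh₁S] at e
  have hSsplitH : S.filter (fun x => x ∈ H) = h₁ ::ₘ (S.erase h₁).filter (fun x => x ∈ H) := by
    conv_lhs => rw [← Multiset.cons_erase hh₁S]
    rw [Multiset.filter_cons_of_pos (p := fun x => x ∈ H) _ hh₁H]
  have htnew : ((u * h₁ ::ₘ S.erase h₁).filter fun x => x ∈ H).card = t - 1 := by
    rw [Multiset.filter_cons_of_neg (p := fun x => x ∈ H) _ hzH]
    rw [hSsplitH] at ht
    simp only [Multiset.card_cons] at ht
    omega
  have hfiltnonH : ((u * h₁ ::ₘ S.erase h₁).filter fun x => x ∉ H)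
      = (u * h₁) ::ₘ (S.filter fun x => x ∉ H) := by
    rw [Multiset.filter_cons_of_pos (p := fun x => x ∉ H) _ hzH, hSsplit]
  have hmkz : ((u * h₁ : G) : G ⧸ H) = ((u : G) : G ⧸ H) := by
    rw [QuotientGroup.eq]
    have h5 : (u * h₁)⁻¹ * u = h₁⁻¹ := by group
    rw [h5]
    exact inv_mem hh₁H
  have hLnew : LeftDistinct H ((u * h₁ ::ₘ S.erase h₁).filter fun x => x ∉ H) := by
    rw [hfiltnonH]
    unfold LeftDistinct
    rw [Multiset.map_cons, Multiset.nodup_cons]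
    refine ⟨?_, hL⟩
    intro hmem
    rw [hmkz] at hmem
    apply huFL
    rw [hFL]
    exact Finset.mem_union_left _ (Multiset.mem_toFinset.mpr hmem)
  have hRnew : RightDistinct H ((u * h₁ ::ₘ S.erase h₁).filter fun x => x ∉ H) := by
    rw [hfiltnonH]
    unfold RightDistinct
    rw [Multiset.map_cons, Multiset.nodup_cons]
    refine ⟨?_, hR⟩
    intro hmem
    obtain ⟨v, hv, hveq⟩ := Multiset.mem_map.mp hmem
    apply huFR
    rw [hFR]
    apply Finset.mem_union_left
    apply Multiset.mem_toFinset.mpr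
    refine Multiset.mem_map.mpr ⟨v, hv, ?_⟩
    have h5 : ((v⁻¹ : G) : G ⧸ H) = (((u * h₁)⁻¹ : G) : G ⧸ H) := hveq
    rw [QuotientGroup.eq] at h5
    rw [QuotientGroup.eq]
    have h6 : (h₁ * v⁻¹)⁻¹ * u⁻¹ = v⁻¹⁻¹ * (u * h₁)⁻¹ := by group
    rw [h6]
    exact h5
  have hcardnew : (u * h₁ ::ₘ S.erase h₁).card = r := by
    rw [Multiset.card_cons, Multiset.card_erase_of_mem hh₁S, hcard]
    have hpred : r.pred = r - 1 := Nat.pred_eq_sub_one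
    omega
  have hgennew : Subgroup.closure {x : G | x ∈ (u * h₁ ::ₘ S.erase h₁)} = ⊤ := by
    rw [equiv_closure e, hgen]
  obtain ⟨S₁, he1, hle1, hL1, hR1⟩ := ih (t - 1) (by omega) _ hcardnew hgennew htnew hLnew hRnew
  exact ⟨S₁, e.trans he1, hle1, hL1, hR1⟩

end Phase2
end NAux

namespace NAux
section Assemble
set_option linter.unusedSectionVars false

open Subgroup Multiset

variable {G : Type*} [Group G]

lemma nodup_of_card_le_one' {α : Type*} {m : Multiset α} (h : m.card ≤ 1) : m.Nodup := by
  interval_cases hm : m.card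
  · rw [Multiset.card_eq_zero.mp hm]; exact Multiset.nodup_zero
  · obtain ⟨a, rfl⟩ := Multiset.card_eq_one.mp hm
    exact Multiset.nodup_singleton a

lemma full_distinct (H : Subgroup G) (S : Multiset G) (f : G → G ⧸ H)
    (hcardH : (S.filter fun x => x ∈ H).card ≤ 1)
    (hnd : ((S.filter fun x => x ∉ H).map f).Nodup)
    (hfH : ∀ v ∈ H, f v = ((1 : G) : G ⧸ H))
    (hfnH : ∀ v, v ∉ H → f v ≠ ((1 : G) : G ⧸ H)) :
    (S.map f).Nodup := by
  have hsplit := Multiset.filter_add_not (fun x => x ∈ H) S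
  rw [← hsplit, Multiset.map_add, Multiset.nodup_add]
  refine ⟨?_, hnd, ?_⟩
  · apply nodup_of_card_le_one'
    rw [Multiset.card_map]
    exact hcardH
  · rw [Multiset.disjoint_left]
    intro a ha hb
    obtain ⟨v, hv, rfl⟩ := Multiset.mem_map.mp ha
    obtain ⟨w, hw, hweq⟩ := Multiset.mem_map.mp hb
    have hvH : v ∈ H := (Multiset.mem_filter.mp hv).2
    have hwH : w ∉ H := (Multiset.mem_filter.mp hw).2
    exact hfnH w hwH (hweq.trans (hfH v hvH))

end Assemble
end NAux

theorem stmt2' {G : Type*} [Group G] (r : ℕ)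
    (H : Subgroup G) [H.FiniteIndex] (hindex : r ≤ H.index)
    (hdiv : ∀ d : ℕ, d ∣ H.normalCore.index → 1 < d → 2 * r - 1 ≤ d)
    (S : Multiset G) (hcard : S.card = r)
    (hgen : Subgroup.closure {x : G | x ∈ S} = ⊤) :
    ∃ S' : Multiset G, NielsenEquiv S S' ∧ LeftDistinct H S' ∧ RightDistinct H S' ∧
      ∃ T : Set G, IsLeftTransversal H T ∧ IsRightTransversal H T ∧ ∀ x ∈ S', x ∈ T := by
  classical
  obtain ⟨S₂, he2, hL2, hR2⟩ := NAux.phase1 H _ S rfl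
  have hcard2 : S₂.card = r := by rw [NAux.equiv_card he2, hcard]
  have hgen2 : Subgroup.closure {x : G | x ∈ S₂} = ⊤ := by rw [NAux.equiv_closure he2, hgen]
  have hproper : 2 ≤ r → H ≠ ⊤ := by
    intro h2 htop
    rw [htop, Subgroup.index_top] at hindex
    omega
  obtain ⟨S₃, he3, hle3, hL3, hR3⟩ := NAux.phase2 H r hdiv hproper _ S₂ hcard2 hgen2 rfl hL2 hR2
  have heq : NielsenEquiv S S₃ := he2.trans he3
  have hmk1 : ∀ v : G, v ∈ H → ((v : G ⧸ H)) = ((1 : G) : G ⧸ H) := by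
    intro v hv
    rw [QuotientGroup.eq]
    simpa using inv_mem hv
  have hmk1inv : ∀ v : G, v ∈ H → (((v⁻¹ : G)) : G ⧸ H) = ((1 : G) : G ⧸ H) :=
    fun v hv => hmk1 v⁻¹ (inv_mem hv)
  have hLD : LeftDistinct H S₃ := by
    apply NAux.full_distinct H S₃ _ hle3 hL3 hmk1
    intro v hv h
    apply hv
    have h2 := QuotientGroup.eq.mp h
    simpa using h2
  have hRD : RightDistinct H S₃ := by
    apply NAux.full_distinct H S₃ _ hle3 hR3 hmk1inv
    intro v hv h
    apply hv
    have h2 := QuotientGroup.eq.mp h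
    simpa using h2
  have hPL : Set.InjOn (fun x : G => ((x : G ⧸ H))) ↑S₃.toFinset := by
    intro x hx y hy hxy
    exact Multiset.inj_on_of_nodup_map hLD x (Multiset.mem_toFinset.mp hx)
      y (Multiset.mem_toFinset.mp hy) hxy
  have hPR : Set.InjOn (fun x : G => (((x⁻¹ : G)) : G ⧸ H)) ↑S₃.toFinset := by
    intro x hx y hy hxy
    exact Multiset.inj_on_of_nodup_map hRD x (Multiset.mem_toFinset.mp hx)
      y (Multiset.mem_toFinset.mp hy) hxy
  obtain ⟨T, hTL, hTR, hTP⟩ := NAux.toolC H S₃.toFinset hPL hPR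
  exact ⟨S₃, heq, hLD, hRD, T, hTL, hTR, fun x hx => hTP x (Multiset.mem_toFinset.mpr hx)⟩


/-- rank-`r` group, finite index subgroup `H` with `[G:H] ≥ r`, and
every nontrivial divisor of `[G : core_G(H)]` at least `2r - 1`: every generating
set of size `r` is Nielsen equivalent to a multiset in pairwise distinct left and
right cosets of `H`, contained in a left-right transversal. -/
theorem stmt2 {G : Type*} [Group G] [Group.FG G] (r : ℕ) (hrank : Group.rank G = r)
    (H : Subgroup G) [H.FiniteIndex] (hindex : r ≤ H.index)
    (hdiv : ∀ d : ℕ, d ∣ H.normalCore.index → 1 < d → 2 * r - 1 ≤ d)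
    (S : Multiset G) (hcard : S.card = r) (hnd : S.Nodup)
    (hgen : Subgroup.closure {x : G | x ∈ S} = ⊤) :
    ∃ S' : Multiset G, NielsenEquiv S S' ∧ LeftDistinct H S' ∧ RightDistinct H S' ∧
      ∃ T : Set G, IsLeftTransversal H T ∧ IsRightTransversal H T ∧ ∀ x ∈ S', x ∈ T :=
  stmt2' r H hindex hdiv S hcard hgen
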